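/- arXiv:1710.10394 — 6 statements merged into one kernel-verified Lean document; each statement's English description precedes it below -/
import Mathlib

section
/- Let G_h, G_l, F_l, F_h be Laurent polynomials over ℝ satisfying the two-channel perfect reconstruction condition F_l(z)G_l(z) + F_h(z)G_h(z) = 2z^{-n₀} and F_l(z)G_l(−z) + F_h(z)G_h(−z) = 0. For any Laurent polynomial T, define G_h'(z) = G_h(z) − G_l(z)T(z²) and F_l'(z) = F_l(z) + F_h(z)T(z²). Then G_l, G_h', F_l', F_h again satisfy the perfect reconstruction condition with the same delay n₀. -/
/-- Evaluation of the FIR (Laurent polynomial) transfer function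
`H(z) = Σ_k h[k] z^{-k}` at a nonzero complex `z`. -/
noncomputable def lev (h : ℤ → ℝ) (z : ℂ) : ℂ := ∑ᶠ k : ℤ, (h k : ℂ) * z ^ (-k)

/-- Predict lifting step preserves perfect reconstruction: if the two-channel
filterbank `(G_l, G_h, F_l, F_h)` satisfies the no-distortion condition
`F_l G_l + F_h G_h = 2 z^{-n₀}` and the no-aliasing condition
`F_l(z) G_l(−z) + F_h(z) G_h(−z) = 0`, then for any predict filter `T`, the
lifted filters `G_h'(z) = G_h(z) − G_l(z) T(z²)` and
`F_l'(z) = F_l(z) + F_h(z) T(z²)` together with `G_l, F_h` again satisfy both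
conditions with the same delay `n₀`. -/
theorem predict_lifting_preserves_PR
    (gl gh fl fh t : ℤ → ℝ)
    (hgl : (Function.support gl).Finite) (hgh : (Function.support gh).Finite)
    (hfl : (Function.support fl).Finite) (hfh : (Function.support fh).Finite)
    (ht : (Function.support t).Finite) (n₀ : ℤ)
    (hPR : ∀ z : ℂ, z ≠ 0 → lev fl z * lev gl z + lev fh z * lev gh z = 2 * z ^ (-n₀))
    (hAlias : ∀ z : ℂ, z ≠ 0 → lev fl z * lev gl (-z) + lev fh z * lev gh (-z) = 0) :
    (∀ z : ℂ, z ≠ 0 →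
      (lev fl z + lev fh z * lev t (z ^ 2)) * lev gl z
        + lev fh z * (lev gh z - lev gl z * lev t (z ^ 2)) = 2 * z ^ (-n₀))
    ∧ (∀ z : ℂ, z ≠ 0 →
      (lev fl z + lev fh z * lev t (z ^ 2)) * lev gl (-z)
        + lev fh z * (lev gh (-z) - lev gl (-z) * lev t ((-z) ^ 2)) = 0) := by
  constructor
  · intro z hz
    have := hPR z hz
    ring_nf
    linear_combination this
  · intro z hz
    have := hAlias z hz
    have h2 : (-z) ^ 2 = z ^ 2 := by ring
    rw [h2]
    linear_combination this
end

section
/- Let G_h, G_l, F_l, F_h be Laurent polynomials satisfying the two-channel perfect reconstruction condition (F_l G_l + F_h G_h)(z) = 2z^{-n₀} and (F_l(z)G_l(−z) + F_h(z)G_h(−z)) = 0. For any Laurent polynomial S, define G_l'(z) = G_l(z) + G_h(z)S(z²) and F_h'(z) = F_h(z) − F_l(z)S(z²). Then G_l', G_h, F_l, F_h' again satisfy the perfect reconstruction condition with the same delay n₀. -/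
/-- Update lifting step preserves perfect reconstruction: if the two-channel
filterbank `(G_l, G_h, F_l, F_h)` satisfies `F_l G_l + F_h G_h = 2 z^{-n₀}` and
`F_l(z) G_l(−z) + F_h(z) G_h(−z) = 0`, then for any update filter `S`, the
lifted filters `G_l'(z) = G_l(z) + G_h(z) S(z²)` and
`F_h'(z) = F_h(z) − F_l(z) S(z²)` together with `G_h, F_l` again satisfy both
conditions with the same delay `n₀`. -/
theorem update_lifting_preserves_PR
    (gl gh fl fh s : ℤ → ℝ)
    (hgl : (Function.support gl).Finite) (hgh : (Function.support gh).Finite)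
    (hfl : (Function.support fl).Finite) (hfh : (Function.support fh).Finite)
    (hs : (Function.support s).Finite) (n₀ : ℤ)
    (hPR : ∀ z : ℂ, z ≠ 0 → lev fl z * lev gl z + lev fh z * lev gh z = 2 * z ^ (-n₀))
    (hAlias : ∀ z : ℂ, z ≠ 0 → lev fl z * lev gl (-z) + lev fh z * lev gh (-z) = 0) :
    (∀ z : ℂ, z ≠ 0 →
      lev fl z * (lev gl z + lev gh z * lev s (z ^ 2))
        + (lev fh z - lev fl z * lev s (z ^ 2)) * lev gh z = 2 * z ^ (-n₀))
    ∧ (∀ z : ℂ, z ≠ 0 →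
      lev fl z * (lev gl (-z) + lev gh (-z) * lev s ((-z) ^ 2))
        + (lev fh z - lev fl z * lev s (z ^ 2)) * lev gh (-z) = 0) := by
  constructor
  · intro z hz
    have h := hPR z hz
    ring_nf
    ring_nf at h
    linear_combination h
  · intro z hz
    have h := hAlias z hz
    rw [neg_pow, show ((-1:ℂ))^2 = 1 by norm_num, one_mul]
    linear_combination h
end

section
/- (Theorem 1, predict locality) Let q1, q2 ≥ 1, M = q1+q2, and let a, d be the rational Lazy wavelet branches of a signal x, with k-th blocks a^k[m] = x[(k−1)M + m] for 0 ≤ m ≤ q1−1 and d^k[m] = x[(k−1)M + q1 + m] for 0 ≤ m ≤ q2−1. The prediction a4 produced by the 2-tap filter T(z) = z^{q1 q2}(t[0] z^{-q2} + t[1]) applied after the predict rate converter satisfies, for 0 ≤ m ≤ q2−1, a4^k[m] = t[0]·a[k q1 − 1 + ⌊q1 m / q2⌋] + t[1]·a[k q1 + ⌊q1 m / q2⌋]; consequently every sample of the k-th block of d is predicted only from samples of the k-th and (k+1)-th blocks of a. -/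
/-- `M`-fold upsampler: `(↑M x)[M n] = x[n]`, zero at indices not divisible by `M`. -/
noncomputable def upSample (M : ℕ) (x : ℤ → ℝ) : ℤ → ℝ :=
  fun n => if (M : ℤ) ∣ n then x (n / M) else 0

/-- `M`-fold downsampler: `(↓M x)[n] = x[M n]`. -/
def downSample (M : ℕ) (x : ℤ → ℝ) : ℤ → ℝ := fun n => x ((M : ℤ) * n)

/-- Filtering: discrete convolution with impulse response `h`. -/
noncomputable def conv (h x : ℤ → ℝ) : ℤ → ℝ := fun n => ∑ᶠ k : ℤ, h k * x (n - k)

/-- Impulse response of `R(z) = 1 + z^{-1} + … + z^{-(q−1)}`. -/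
def boxFilter (q : ℕ) : ℤ → ℝ := fun j => if 0 ≤ j ∧ j < (q : ℤ) then 1 else 0

lemma conv_two_tap (j0 j1 : ℤ) (hne : j0 ≠ j1) (t0 t1 : ℝ) (x : ℤ → ℝ) (n : ℤ) :
    conv (fun j => if j = j0 then t0 else if j = j1 then t1 else 0) x n
      = t0 * x (n - j0) + t1 * x (n - j1) := by
  unfold conv
  have hsupp : (Function.support fun j : ℤ =>
      (if j = j0 then t0 else if j = j1 then t1 else 0) * x (n - j)) ⊆ ({j0, j1} : Finset ℤ) := by
    intro j hj
    simp only [Function.mem_support] at hj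
    by_contra hmem
    simp only [Finset.coe_insert, Finset.coe_singleton, Set.mem_insert_iff,
      Set.mem_singleton_iff, not_or] at hmem
    rw [if_neg hmem.1, if_neg hmem.2, zero_mul] at hj
    exact hj rfl
  rw [finsum_eq_sum_of_support_subset _ hsupp, Finset.sum_pair hne]
  simp [hne, hne.symm]

lemma conv_box_up (q : ℕ) (hq : 1 ≤ q) (a : ℤ → ℝ) (n : ℤ) :
    conv (boxFilter q) (upSample q a) n = a (n / q) := by
  unfold conv boxFilter upSample
  have hq' : (0:ℤ) < q := by exact_mod_cast hq
  have hsupp : (Function.support fun j : ℤ =>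
      (if 0 ≤ j ∧ j < (q:ℤ) then (1:ℝ) else 0) *
        (if (q:ℤ) ∣ (n - j) then a ((n - j) / q) else 0)) ⊆ Finset.Ico (0:ℤ) q := by
    intro j hj
    simp only [Function.mem_support] at hj
    by_contra hmem
    simp only [Finset.coe_Ico, Set.mem_Ico] at hmem
    rw [if_neg hmem, zero_mul] at hj
    exact hj rfl
  rw [finsum_eq_sum_of_support_subset _ hsupp]
  have hr0 : 0 ≤ n % (q:ℤ) := Int.emod_nonneg n (by positivity)
  have hr1 : n % (q:ℤ) < q := Int.emod_lt_of_pos n hq'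
  rw [Finset.sum_eq_single_of_mem (n % (q:ℤ)) (by simp [Finset.mem_Ico, hr0, hr1])]
  · have hkey : (q:ℤ) * (n / q) + n % q = n := Int.mul_ediv_add_emod n q
    have hdvd : (q:ℤ) ∣ (n - n % q) := ⟨n / q, by linarith⟩
    rw [if_pos ⟨hr0, hr1⟩, if_pos hdvd, one_mul]
    congr 1
    have : n - n % q = (n / q) * q := by linarith
    rw [this, Int.mul_ediv_cancel _ (by positivity)]
  · intro j hj hjne
    simp only [Finset.mem_Ico] at hj
    rw [if_pos ⟨hj.1, hj.2⟩, one_mul, if_neg]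
    intro hdvd
    have hkey : (q:ℤ) * (n / q) + n % q = n := Int.mul_ediv_add_emod n q
    have hdvd2 : (q:ℤ) ∣ (n - n % q) := ⟨n / q, by linarith⟩
    have h3 : (q:ℤ) ∣ (j - n % q) := by
      have h4 := dvd_sub hdvd2 hdvd
      have h5 : (n - n % q) - (n - j) = j - n % q := by ring
      rwa [h5] at h4
    rcases h3 with ⟨c, hc⟩
    have hc0 : c = 0 := by nlinarith [hr0, hr1, hj.1, hj.2]
    apply hjne
    rw [hc0, mul_zero] at hc
    omega


/-- Theorem 1 (predict locality): with the 2-tap predict filter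
`T(z) = z^{q1 q2}(t[0] z^{-q2} + t[1])` applied after the predict rate
converter, the prediction `a4` satisfies, for `0 ≤ m ≤ q2 − 1`,
`a4^k[m] = t[0]·a[k q1 − 1 + ⌊q1 m / q2⌋] + t[1]·a[k q1 + ⌊q1 m / q2⌋]`;
consequently every sample of the `k`-th block of `d` is predicted only from
samples of the `k`-th and `(k+1)`-th blocks of `a` (the predicting indices lie
in `[(k−1)q1, (k+1)q1 − 1]`). -/
theorem predict_two_tap_locality (q1 q2 : ℕ) (h1 : 1 ≤ q1) (h2 : 1 ≤ q2)
    (t0 t1 : ℝ) (a : ℤ → ℝ) :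
    let T : ℤ → ℝ := fun j =>
      if j = (q2 : ℤ) - (q1 : ℤ) * q2 then t0
      else if j = -((q1 : ℤ) * q2) then t1 else 0
    let a4 : ℤ → ℝ := downSample q1 (conv T (conv (boxFilter q2) (upSample q2 a)))
    ∀ k m : ℤ, 0 ≤ m → m < (q2 : ℤ) →
      (a4 ((k - 1) * q2 + m)
          = t0 * a (k * q1 - 1 + Int.fdiv ((q1 : ℤ) * m) q2)
            + t1 * a (k * q1 + Int.fdiv ((q1 : ℤ) * m) q2))
      ∧ (k - 1) * q1 ≤ k * q1 - 1 + Int.fdiv ((q1 : ℤ) * m) q2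
      ∧ k * q1 + Int.fdiv ((q1 : ℤ) * m) q2 ≤ (k + 1) * q1 - 1 := by
  intro T a4 k m hm0 hm1
  have hq1 : (0:ℤ) < q1 := by exact_mod_cast h1
  have hq2 : (0:ℤ) < q2 := by exact_mod_cast h2
  have hfd : Int.fdiv ((q1:ℤ) * m) q2 = ((q1:ℤ) * m) / q2 :=
    Int.fdiv_eq_ediv_of_nonneg _ (le_of_lt hq2)
  have hdiv0 : (0:ℤ) ≤ ((q1:ℤ) * m) / q2 := Int.ediv_nonneg (by positivity) (le_of_lt hq2)
  have hdivlt : ((q1:ℤ) * m) / q2 < q1 := by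
    rw [Int.ediv_lt_iff_lt_mul hq2]
    nlinarith
  refine ⟨?_, by rw [hfd]; nlinarith, by rw [hfd]; nlinarith⟩
  show conv T (conv (boxFilter q2) (upSample q2 a)) ((q1:ℤ) * ((k - 1) * q2 + m)) = _
  have hne : (q2:ℤ) - (q1:ℤ)*q2 ≠ -((q1:ℤ)*q2) := by intro h; omega
  rw [conv_two_tap _ _ hne, conv_box_up q2 h2, conv_box_up q2 h2]
  have e1 : (q1:ℤ) * ((k - 1) * q2 + m) - ((q2:ℤ) - (q1:ℤ)*q2)
      = (q1:ℤ)*m + (k * q1 - 1) * q2 := by ring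
  have e2 : (q1:ℤ) * ((k - 1) * q2 + m) - (-((q1:ℤ)*q2))
      = (q1:ℤ)*m + (k * q1) * q2 := by ring
  rw [e1, e2, Int.add_mul_ediv_right _ _ (ne_of_gt hq2),
    Int.add_mul_ediv_right _ _ (ne_of_gt hq2), hfd]
  ring_nf
end

section
/- (Theorem 3, update locality) Let q1, q2 ≥ 1, M = q1+q2, with blocks a^k[m] = x[(k−1)M+m] (0 ≤ m < q1) and d^k[m] = x[(k−1)M+q1+m] (0 ≤ m < q2). The update signal d4 produced by the 2-tap filter S(z) = s[0] + s[1] z^{-q1} applied after the update rate converter (q1-fold upsampler, filter R_u(z)=1+z^{-1}+…+z^{-(q1−1)}, q2-fold downsampler) satisfies, for 0 ≤ m ≤ q1−1, d4^k[m] = s[0]·d[(k−1)q2 + ⌊q2 m / q1⌋] + s[1]·d[(k−1)q2 + ⌊(q2 m − q1)/q1⌋]; consequently every sample of the k-th block of a is updated only from samples of the (k−1)-th and k-th blocks of d. -/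
lemma hold_conv (q1 : ℕ) (h1 : 1 ≤ q1) (d : ℤ → ℝ) (n : ℤ) :
    conv (boxFilter q1) (upSample q1 d) n = d (n / (q1 : ℤ)) := by
  have hq1 : (0:ℤ) < q1 := by exact_mod_cast h1
  have hne : (q1:ℤ) ≠ 0 := hq1.ne'
  have hsub : Function.support (fun k : ℤ => boxFilter q1 k * upSample q1 d (n - k))
      ⊆ ↑(Finset.Ico (0:ℤ) (q1:ℤ)) := by
    intro k hk
    simp only [Function.mem_support] at hk
    by_contra hk'
    simp only [Finset.coe_Ico, Set.mem_Ico, not_and_or, not_le, not_lt] at hk'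
    apply hk
    have : boxFilter q1 k = 0 := by
      unfold boxFilter; rw [if_neg]; push_neg; omega
    rw [this, zero_mul]
  rw [conv, finsum_eq_finset_sum_of_support_subset _ hsub]
  rw [Finset.sum_eq_single_of_mem (n % (q1:ℤ))]
  · have hdvd : (q1:ℤ) ∣ n - n % q1 := ⟨n / q1, by have := Int.mul_ediv_add_emod n q1; linarith⟩
    have hbox : boxFilter q1 (n % q1) = 1 := by
      unfold boxFilter; rw [if_pos ⟨Int.emod_nonneg n hne, Int.emod_lt_of_pos n hq1⟩]
    rw [hbox, one_mul]
    unfold upSample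
    rw [if_pos hdvd]
    congr 1
    have : n - n % q1 = q1 * (n / q1) := by have := Int.mul_ediv_add_emod n q1; linarith
    rw [this, Int.mul_ediv_cancel_left _ hne]
  · simp only [Finset.mem_Ico]
    exact ⟨Int.emod_nonneg n hne, Int.emod_lt_of_pos n hq1⟩
  · intro b hb hbne
    simp only [Finset.mem_Ico] at hb
    unfold upSample
    rw [if_neg, mul_zero]
    intro hdvd
    apply hbne
    have hmod : b ≡ n [ZMOD (q1:ℤ)] := Int.modEq_iff_dvd.mpr (by simpa using hdvd)
    have hb' : b % (q1:ℤ) = b := Int.emod_eq_of_lt hb.1 hb.2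
    rw [← hb']
    exact hmod

lemma two_tap_conv (q1 : ℕ) (h1 : 1 ≤ q1) (s0 s1 : ℝ) (y : ℤ → ℝ) (n : ℤ) :
    conv (fun j => if j = 0 then s0 else if j = (q1 : ℤ) then s1 else 0) y n
      = s0 * y n + s1 * y (n - q1) := by
  have hne : (q1:ℤ) ≠ 0 := by positivity
  have hsub : Function.support
      (fun k : ℤ => (if k = 0 then s0 else if k = (q1:ℤ) then s1 else 0) * y (n - k))
      ⊆ ↑({0, (q1:ℤ)} : Finset ℤ) := by
    intro k hk
    simp only [Function.mem_support] at hk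
    simp only [Finset.coe_insert, Finset.coe_singleton, Set.mem_insert_iff, Set.mem_singleton_iff]
    by_contra hk'
    push_neg at hk'
    apply hk
    rw [if_neg hk'.1, if_neg hk'.2, zero_mul]
  rw [conv, finsum_eq_finset_sum_of_support_subset _ hsub,
    Finset.sum_pair (by exact hne.symm)]
  rw [if_neg hne, if_pos rfl, sub_zero]
  simp

/-- Theorem 3 (update locality): with the 2-tap update filter
`S(z) = s[0] + s[1] z^{-q1}` applied after the update rate converter
(`q1`-fold upsampler, `R_u(z) = 1 + z^{-1} + … + z^{-(q1−1)}`, `q2`-fold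
downsampler), the update signal `d4` satisfies, for `0 ≤ m ≤ q1 − 1`,
`d4^k[m] = s[0]·d[(k−1)q2 + ⌊q2 m / q1⌋] + s[1]·d[(k−1)q2 + ⌊(q2 m − q1)/q1⌋]`;
consequently every sample of the `k`-th block of `a` is updated only from
samples of the `(k−1)`-th and `k`-th blocks of `d` (the updating indices lie
in `[(k−2)q2, k q2 − 1]`). -/
theorem update_two_tap_locality (q1 q2 : ℕ) (h1 : 1 ≤ q1) (h2 : 1 ≤ q2)
    (s0 s1 : ℝ) (d : ℤ → ℝ) :
    let S : ℤ → ℝ := fun j => if j = 0 then s0 else if j = (q1 : ℤ) then s1 else 0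
    let d4 : ℤ → ℝ := downSample q2 (conv S (conv (boxFilter q1) (upSample q1 d)))
    ∀ k m : ℤ, 0 ≤ m → m < (q1 : ℤ) →
      (d4 ((k - 1) * q1 + m)
          = s0 * d ((k - 1) * q2 + Int.fdiv ((q2 : ℤ) * m) q1)
            + s1 * d ((k - 1) * q2 + Int.fdiv ((q2 : ℤ) * m - q1) q1))
      ∧ (k - 2) * q2 ≤ (k - 1) * q2 + Int.fdiv ((q2 : ℤ) * m - q1) q1
      ∧ (k - 1) * q2 + Int.fdiv ((q2 : ℤ) * m) q1 ≤ k * q2 - 1 := by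
  intro S d4 k m hm hm'
  have hq1 : (0:ℤ) < q1 := by exact_mod_cast h1
  have hq2 : (0:ℤ) < q2 := by exact_mod_cast h2
  have hne : (q1:ℤ) ≠ 0 := hq1.ne'
  have hf1 : Int.fdiv ((q2:ℤ) * m) q1 = ((q2:ℤ) * m) / q1 := Int.fdiv_eq_ediv_of_nonneg _ hq1.le
  have hf2 : Int.fdiv ((q2:ℤ) * m - q1) q1 = ((q2:ℤ) * m - q1) / q1 :=
    Int.fdiv_eq_ediv_of_nonneg _ hq1.le
  refine ⟨?_, ?_, ?_⟩
  · show downSample q2 (conv S (conv (boxFilter q1) (upSample q1 d))) ((k - 1) * q1 + m) = _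
    rw [downSample]
    rw [two_tap_conv q1 h1 s0 s1 _ _, hold_conv q1 h1, hold_conv q1 h1, hf1, hf2]
    congr 2
    · have h : (q2:ℤ) * ((k - 1) * q1 + m) = (q2:ℤ) * m + q1 * ((k - 1) * q2) := by ring
      rw [h, Int.add_mul_ediv_left _ _ hne]; ring
    · have h : (q2:ℤ) * ((k - 1) * q1 + m) - q1 = ((q2:ℤ) * m - q1) + q1 * ((k - 1) * q2) := by
        ring
      rw [h, Int.add_mul_ediv_left _ _ hne]; ring
  · rw [hf2]
    have : -(q2:ℤ) ≤ ((q2:ℤ) * m - q1) / q1 := by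
      rw [Int.le_ediv_iff_mul_le hq1]
      nlinarith
    linarith
  · rw [hf1]
    have : ((q2:ℤ) * m) / q1 < q2 := by
      rw [Int.ediv_lt_iff_lt_mul hq1]
      nlinarith
    linarith
end

section
/- (Theorem 2 structure) Let q1, q2 ≥ 1, M = q1+q2 with gcd(M, q2) = 1. In a 2-channel rational filterbank with lowpass branch (filter G_l, q1-fold upsampler after filtering through M-fold downsampling) and highpass branch (filter G_h, M-fold downsampler, q2-fold upsampler), performing the lifting predict step with composite predict filter P(z) = R_p(z)T(z) is equivalent to replacing G_h by G_h^{new}(z) = G_h(z) − (1/q1) Σ_{k=0}^{q1−1} G_l(z^{q2/q1} W_{q1}^{q2 k}) P(z^{M/q1} W_{q1}^{M k}), where W_{q1} = exp(−2πi/q1); that is, both systems produce identical lower-branch outputs for every input. -/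
open Function Set

/-! ### Auxiliary lemmas -/

lemma finsum_comp_inj {α : Type*} [AddCommMonoid α] (f : ℤ → α) (g : ℤ → ℤ)
    (hg : Function.Injective g) (hs : support f ⊆ Set.range g) :
    ∑ᶠ m, f m = ∑ᶠ t, f (g t) := by
  rw [← finsum_mem_range hg, ← finsum_mem_univ f,
    ← finsum_mem_inter_support f Set.univ, ← finsum_mem_inter_support f (Set.range g),
    Set.univ_inter, Set.inter_eq_right.mpr hs]

lemma lev_eq_sum (h : ℤ → ℝ) {s : Finset ℤ} (hs : support h ⊆ ↑s) (z : ℂ) :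
    lev h z = ∑ k ∈ s, (h k : ℂ) * z ^ (-k) := by
  apply finsum_eq_finset_sum_of_support_subset
  intro k hk
  apply hs
  simp only [mem_support, ne_eq] at hk ⊢
  intro h0
  simp [h0] at hk

lemma conv_eq_sum (h x : ℤ → ℝ) {s : Finset ℤ} (hs : support h ⊆ ↑s) (n : ℤ) :
    conv h x n = ∑ k ∈ s, h k * x (n - k) := by
  apply finsum_eq_finset_sum_of_support_subset
  intro k hk
  apply hs
  simp only [mem_support, ne_eq] at hk ⊢
  intro h0
  simp [h0] at hk

lemma upSample_mul (r : ℕ) (hr : (r:ℤ) ≠ 0) (f : ℤ → ℝ) (b : ℤ) :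
    upSample r f ((r:ℤ) * b) = f b := by
  rw [upSample, if_pos ⟨b, rfl⟩, Int.mul_ediv_cancel_left _ hr]

lemma upSample_not_dvd (r : ℕ) (f : ℤ → ℝ) (m : ℤ) (h : ¬ (r:ℤ) ∣ m) :
    upSample r f m = 0 := if_neg h

lemma support_upSample (r : ℕ) (hr : 1 ≤ r) (f : ℤ → ℝ) (hf : (support f).Finite) :
    (support (upSample r f)).Finite := by
  apply Set.Finite.subset (hf.image (fun b => (r : ℤ) * b))
  intro m hm
  simp only [mem_support, upSample, ne_eq] at hm
  by_cases hd : (r : ℤ) ∣ m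
  · rcases hd with ⟨t, rfl⟩
    rw [if_pos ⟨t, rfl⟩] at hm
    have hr0 : (r : ℤ) ≠ 0 := by exact_mod_cast Nat.one_le_iff_ne_zero.mp hr
    refine ⟨(r:ℤ) * t / r, hm, ?_⟩
    rw [Int.mul_ediv_cancel_left _ hr0]
  · simp [hd] at hm

lemma support_downSample (r : ℕ) (hr : 1 ≤ r) (f : ℤ → ℝ) (hf : (support f).Finite) :
    (support (downSample r f)).Finite := by
  have hsub : support (downSample r f) ⊆ (fun m => (r:ℤ) * m) ⁻¹' (support f) := by
    intro m hm; exact hm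
  apply Set.Finite.subset (hf.preimage ?_) hsub
  intro a _ b _ hab
  have hr0 : (r : ℤ) ≠ 0 := by exact_mod_cast Nat.one_le_iff_ne_zero.mp hr
  exact mul_left_cancel₀ hr0 hab

lemma support_conv (f g : ℤ → ℝ) (hf : (support f).Finite) (hg : (support g).Finite) :
    (support (conv f g)).Finite := by
  apply Set.Finite.subset (Set.Finite.image2 (fun a b => a + b) hf hg)
  intro n hn
  simp only [mem_support, conv, ne_eq] at hn
  by_contra hc
  apply hn
  apply finsum_eq_zero_of_forall_eq_zero
  intro k
  by_cases h1 : f k = 0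
  · simp [h1]
  by_cases h2 : g (n - k) = 0
  · simp [h2]
  have hmem : k + (n - k) ∈ Set.image2 (fun a b => a + b) (support f) (support g) :=
    Set.mem_image2_of_mem (show k ∈ support f from h1) (show n - k ∈ support g from h2)
  exact (hc (by simpa using hmem)).elim

lemma geom_avg (q : ℕ) (r : ℂ) (hr : r ^ q = 1) :
    ∑ j ∈ Finset.range q, r ^ j = if r = 1 then (q : ℂ) else 0 := by
  split_ifs with h
  · simp [h]
  · rw [geom_sum_eq h, hr]; simp

lemma omega_pow_eq_one (q : ℕ) (hq : 1 ≤ q) :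
    Complex.exp (-(2 * Real.pi * Complex.I) / q) ^ q = 1 := by
  rw [← Complex.exp_nat_mul]
  have hq0 : (q : ℂ) ≠ 0 := by exact_mod_cast Nat.one_le_iff_ne_zero.mp hq
  rw [mul_div_cancel₀ _ hq0]
  rw [Complex.exp_neg, Complex.exp_two_pi_mul_I, inv_one]

lemma omega_zpow_eq_one_iff (q : ℕ) (hq : 1 ≤ q) (m : ℤ) :
    Complex.exp (-(2 * Real.pi * Complex.I) / q) ^ (-m) = 1 ↔ (q : ℤ) ∣ m := by
  have hq0 : (q : ℂ) ≠ 0 := by exact_mod_cast Nat.one_le_iff_ne_zero.mp hq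
  have h2 : (2 * (Real.pi:ℂ) * Complex.I) ≠ 0 := by
    simp [Real.pi_ne_zero, Complex.I_ne_zero, two_ne_zero]
  rw [← Complex.exp_int_mul, Complex.exp_eq_one_iff]
  constructor
  · rintro ⟨n, hn⟩
    refine ⟨n, ?_⟩
    field_simp [hq0] at hn
    push_cast at hn
    have h3 : (m:ℂ) * (2*Real.pi*Complex.I) = ((q:ℂ)*n) * (2*Real.pi*Complex.I) := by
      linear_combination (2*Real.pi*Complex.I) * hn
    have h4 : (m:ℂ) = (q:ℂ)*n := mul_right_cancel₀ h2 h3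
    exact_mod_cast h4
  · rintro ⟨n, rfl⟩
    refine ⟨n, ?_⟩
    field_simp
    simp

lemma lev_upSample (r : ℕ) (hr : 1 ≤ r) (h : ℤ → ℝ) (z : ℂ) :
    lev (upSample r h) z = lev h (z ^ r) := by
  have hr0 : (r : ℤ) ≠ 0 := by exact_mod_cast Nat.one_le_iff_ne_zero.mp hr
  have hinj : Function.Injective (fun b : ℤ => (r:ℤ) * b) :=
    fun a b hab => mul_left_cancel₀ hr0 hab
  rw [lev, finsum_comp_inj _ (fun b => (r:ℤ) * b) hinj ?_]
  · apply finsum_congr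
    intro b
    rw [upSample_mul r hr0, ← zpow_natCast z, ← zpow_mul]
    congr 1
    ring
  · intro m hm
    simp only [mem_support, ne_eq] at hm
    by_cases hd : (r:ℤ) ∣ m
    · rcases hd with ⟨t, rfl⟩; exact ⟨t, rfl⟩
    · rw [upSample_not_dvd r h m hd] at hm; simp at hm

lemma conv_upSample_apply (r : ℕ) (hr : 1 ≤ r) (f : ℤ → ℝ) (g : ℤ → ℝ) (m : ℤ) :
    conv (upSample r f) g m = ∑ᶠ b : ℤ, f b * g (m - (r:ℤ) * b) := by
  have hr0 : (r : ℤ) ≠ 0 := by exact_mod_cast Nat.one_le_iff_ne_zero.mp hr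
  have hinj : Function.Injective (fun b : ℤ => (r:ℤ) * b) :=
    fun a b hab => mul_left_cancel₀ hr0 hab
  rw [conv, finsum_comp_inj _ (fun b => (r:ℤ) * b) hinj ?_]
  · apply finsum_congr
    intro b
    rw [upSample_mul r hr0]
  · intro k hk
    simp only [mem_support, ne_eq] at hk
    by_cases hd : (r:ℤ) ∣ k
    · rcases hd with ⟨t, rfl⟩; exact ⟨t, rfl⟩
    · rw [upSample_not_dvd r f k hd] at hk; simp at hk

lemma upSample_downSample (q : ℕ) (D : ℤ → ℝ) :
    upSample q (downSample q D) = fun m => if (q:ℤ) ∣ m then D m else 0 := by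
  funext m
  rw [upSample, downSample]
  split_ifs with h
  · congr 1
    exact Int.mul_ediv_cancel' h
  · rfl

lemma lev_conv (f g : ℤ → ℝ) (hf : (support f).Finite) (hg : (support g).Finite)
    (z : ℂ) (hz : z ≠ 0) : lev (conv f g) z = lev f z * lev g z := by
  classical
  set Sf := hf.toFinset with hSf
  set Sg := hg.toFinset with hSg
  set Sc : Finset ℤ := Finset.image (fun kb : ℤ × ℤ => kb.1 + kb.2) (Sf ×ˢ Sg) with hSc
  have hfS : support f ⊆ ↑Sf := by intro k hk; simpa [hSf] using hk
  have hgS : support g ⊆ ↑Sg := by intro k hk; simpa [hSg] using hk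
  have hconv_mem : support (conv f g) ⊆ ↑Sc := by
    intro n hn
    rw [mem_support, conv] at hn
    obtain ⟨k, hk⟩ : ∃ k, f k * g (n - k) ≠ 0 := by
      by_contra hc
      push_neg at hc
      exact hn (finsum_eq_zero_of_forall_eq_zero hc)
    have hfk : f k ≠ 0 := fun h0 => hk (by simp [h0])
    have hgk : g (n - k) ≠ 0 := fun h0 => hk (by simp [h0])
    simp only [hSc, Finset.coe_image, Set.mem_image]
    exact ⟨(k, n - k), by
      simp only [Finset.coe_product, Set.mem_prod]
      exact ⟨hfS hfk, hgS hgk⟩, by ring⟩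
  rw [lev_eq_sum (conv f g) hconv_mem z, lev_eq_sum f hfS z, lev_eq_sum g hgS z,
    Finset.sum_mul_sum]
  have hconv : ∀ n, ((conv f g n : ℝ) : ℂ) = ∑ k ∈ Sf, (f k : ℂ) * (g (n - k) : ℂ) := by
    intro n
    rw [conv_eq_sum f g hfS n]
    push_cast
    rfl
  calc ∑ n ∈ Sc, ((conv f g n : ℝ) : ℂ) * z ^ (-n)
      = ∑ n ∈ Sc, ∑ k ∈ Sf, (f k : ℂ) * (g (n - k) : ℂ) * z ^ (-n) := by
        apply Finset.sum_congr rfl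
        intro n _
        rw [hconv n, Finset.sum_mul]
    _ = ∑ k ∈ Sf, ∑ n ∈ Sc, (f k : ℂ) * (g (n - k) : ℂ) * z ^ (-n) := Finset.sum_comm
    _ = ∑ k ∈ Sf, ∑ b ∈ Sg, (f k : ℂ) * z ^ (-k) * ((g b : ℂ) * z ^ (-b)) := by
        apply Finset.sum_congr rfl
        intro k hk
        have hsub : Sg.image (fun b => k + b) ⊆ Sc := by
          intro n hn
          rw [Finset.mem_image] at hn
          obtain ⟨b, hb, rfl⟩ := hn
          rw [hSc, Finset.mem_image]
          exact ⟨(k, b), Finset.mem_product.mpr ⟨hk, hb⟩, rfl⟩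
        rw [← Finset.sum_subset hsub ?_]
        · rw [Finset.sum_image (by intro a _ b _ h; exact add_left_cancel h)]
          apply Finset.sum_congr rfl
          intro b _
          rw [show k + b - k = b by ring, neg_add, zpow_add₀ hz]
          ring
        · intro n _ hn
          have : g (n - k) = 0 := by
            by_contra h0
            apply hn
            rw [Finset.mem_image]
            exact ⟨n - k, hgS h0, by ring⟩
          simp [this]

lemma lev_avg (q : ℕ) (hq : 1 ≤ q) (D : ℤ → ℝ) (hD : (support D).Finite) (w : ℂ) :
    (1/(q:ℂ)) * ∑ j ∈ Finset.range q,
        lev D (w * Complex.exp (-(2 * Real.pi * Complex.I) / q) ^ j)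
      = lev (fun m => if (q:ℤ) ∣ m then D m else 0) w := by
  classical
  set ω := Complex.exp (-(2 * Real.pi * Complex.I) / q) with hω
  have hω0 : ω ≠ 0 := Complex.exp_ne_zero _
  have hq0 : (q:ℂ) ≠ 0 := by exact_mod_cast Nat.one_le_iff_ne_zero.mp hq
  set SD := hD.toFinset with hSD
  have hDS : support D ⊆ ↑SD := by intro k hk; simpa [hSD] using hk
  have hDS' : support (fun m => if (q:ℤ) ∣ m then D m else 0) ⊆ ↑SD := by
    intro m hm
    rw [mem_support] at hm
    apply hDS
    rw [mem_support]
    intro h0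
    rw [h0] at hm
    simp at hm
  have hlev : ∀ j, lev D (w * ω ^ j)
      = ∑ m ∈ SD, (D m : ℂ) * (w ^ (-m) * (ω ^ (-m)) ^ j) := by
    intro j
    rw [lev_eq_sum D hDS _]
    apply Finset.sum_congr rfl
    intro m _
    congr 1
    rw [mul_zpow]
    congr 1
    rw [← zpow_natCast ω j, ← zpow_mul, mul_comm, zpow_mul, zpow_natCast]
  rw [Finset.sum_congr rfl (fun j _ => hlev j), Finset.sum_comm,
    lev_eq_sum _ hDS' w, Finset.mul_sum]
  apply Finset.sum_congr rfl
  intro m _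
  have hfold : ∑ j ∈ Finset.range q, (D m : ℂ) * (w ^ (-m) * (ω ^ (-m)) ^ j)
      = (D m : ℂ) * w ^ (-m) * ∑ j ∈ Finset.range q, (ω ^ (-m)) ^ j := by
    rw [Finset.mul_sum]
    apply Finset.sum_congr rfl
    intro j _
    ring
  have hr1 : (ω ^ (-m)) ^ q = 1 := by
    rw [← zpow_natCast (ω ^ (-m)), ← zpow_mul, mul_comm, zpow_mul, zpow_natCast,
      omega_pow_eq_one q hq, one_zpow]
  rw [hfold, geom_avg q _ hr1]
  by_cases hd : (q:ℤ) ∣ m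
  · rw [if_pos ((omega_zpow_eq_one_iff q hq m).mpr hd), if_pos hd]
    field_simp
  · rw [if_neg (fun h => hd ((omega_zpow_eq_one_iff q hq m).mp h)), if_neg hd]
    simp

lemma lev_coeff_zero (a : ℤ → ℂ) (ha : (support a).Finite)
    (h : ∀ z : ℂ, z ≠ 0 → ∑ᶠ k : ℤ, a k * z ^ (-k) = 0) : ∀ k, a k = 0 := by
  classical
  set s := ha.toFinset with hs
  set N : ℕ := s.sup fun k => k.natAbs with hN
  have hbound : ∀ k ∈ s, (0:ℤ) ≤ (N:ℤ) - k := by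
    intro k hk
    have : k.natAbs ≤ N := Finset.le_sup (f := fun k => k.natAbs) hk
    omega
  set Q : Polynomial ℂ := ∑ k ∈ s, Polynomial.monomial ((N:ℤ) - k).toNat (a k) with hQ
  have hsum : ∀ z : ℂ, z ≠ 0 → ∑ᶠ k : ℤ, a k * z ^ (-k) = ∑ k ∈ s, a k * z ^ (-k) := by
    intro z hz
    apply finsum_eq_finset_sum_of_support_subset
    intro k hk
    have : a k ≠ 0 := by
      intro h0; simp [h0] at hk
    simpa [hs] using this
  have heval : ∀ z : ℂ, z ≠ 0 → Q.eval z = 0 := by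
    intro z hz
    rw [hQ]
    rw [Polynomial.eval_finset_sum]
    have : ∀ k ∈ s, (Polynomial.monomial ((N:ℤ) - k).toNat (a k)).eval z
        = z ^ (N : ℤ) * (a k * z ^ (-k)) := by
      intro k hk
      rw [Polynomial.eval_monomial]
      rw [← zpow_natCast z, Int.toNat_of_nonneg (hbound k hk), sub_eq_add_neg,
        zpow_add₀ hz]
      ring
    rw [Finset.sum_congr rfl this, ← Finset.mul_sum, ← hsum z hz, h z hz, mul_zero]
  have hQ0 : Q = 0 := by
    apply Polynomial.eq_zero_of_infinite_isRoot
    apply Set.Infinite.mono (s := {z : ℂ | z ≠ 0})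
    · intro z hz
      exact heval z hz
    · have : ({z : ℂ | z ≠ 0}) = ({0}ᶜ : Set ℂ) := by ext z; simp
      rw [this]
      exact (Set.finite_singleton 0).infinite_compl
  intro k
  by_cases hk : k ∈ s
  · have := congrArg (fun P => Polynomial.coeff P ((N:ℤ) - k).toNat) hQ0
    simp only [hQ, Polynomial.finset_sum_coeff, Polynomial.coeff_monomial,
      Polynomial.coeff_zero] at this
    rw [Finset.sum_eq_single k] at this
    · simpa using this
    · intro b hb hbk
      rw [if_neg]
      intro hEq
      apply hbk
      have h1 := Int.toNat_of_nonneg (hbound b hb)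
      have h2 := Int.toNat_of_nonneg (hbound k hk)
      omega
    · intro hk'; exact absurd hk hk'
  · by_contra h0
    exact hk (by simpa [hs] using h0)

/-- Theorem 2: in a 2-channel rational filterbank (branches
`↑q1 → G_l → ↓M` and `↑q2 → G_h → ↓M`, `M = q1 + q2`, `gcd(M, q2) = 1`),
the lifting predict step with composite predict filter `P(z) = R_p(z) T(z)`
(upper subband upsampled by `q2`, filtered by `P`, downsampled by `q1`, and
subtracted from the lower subband) is equivalent to replacing `G_h` by
`G_h^{new}(z) = G_h(z) − (1/q1) Σ_{k=0}^{q1−1} G_l(z^{q2/q1} W_{q1}^{q2 k}) P(z^{M/q1} W_{q1}^{M k})`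
with `W_{q1} = exp(−2πi/q1)` (stated via the substitution `z = w^{q1}`):
both systems produce identical lower-branch outputs for every input. -/
theorem predict_step_equivalent_highpass (q1 q2 M : ℕ) (h1 : 1 ≤ q1) (h2 : 1 ≤ q2)
    (hM : M = q1 + q2) (hcop : Nat.gcd M q2 = 1)
    (gl gh p ghnew : ℤ → ℝ)
    (hgl : (Function.support gl).Finite) (hgh : (Function.support gh).Finite)
    (hp : (Function.support p).Finite) (hghnew : (Function.support ghnew).Finite)
    (hformula : ∀ w : ℂ, w ≠ 0 →
      lev ghnew (w ^ q1) = lev gh (w ^ q1) -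
        (1 / (q1 : ℂ)) * ∑ k ∈ Finset.range q1,
          lev gl (w ^ q2 * Complex.exp (-(2 * Real.pi * Complex.I) / q1) ^ (q2 * k)) *
            lev p (w ^ M * Complex.exp (-(2 * Real.pi * Complex.I) / q1) ^ (M * k))) :
    ∀ (x : ℤ → ℝ) (n : ℤ),
      downSample M (conv gh (upSample q2 x)) n -
          downSample q1 (conv p (upSample q2 (downSample M (conv gl (upSample q1 x))))) n
        = downSample M (conv ghnew (upSample q2 x)) n := by
  classical
  have hM1 : 1 ≤ M := by omega
  have hq1 : (q1:ℤ) ≠ 0 := by exact_mod_cast Nat.one_le_iff_ne_zero.mp h1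
  have hq2 : (q2:ℤ) ≠ 0 := by exact_mod_cast Nat.one_le_iff_ne_zero.mp h2
  have hMc : (M:ℤ) = (q1:ℤ) + (q2:ℤ) := by exact_mod_cast hM
  have hcopMZ : IsCoprime (q2:ℤ) (M:ℤ) := by
    rw [Int.isCoprime_iff_gcd_eq_one, Int.gcd_natCast_natCast, Nat.gcd_comm]
    exact hcop
  have hcopq1 : IsCoprime (q2:ℤ) (q1:ℤ) := by
    rw [Int.isCoprime_iff_gcd_eq_one, Int.gcd_natCast_natCast, Nat.gcd_comm]
    have := hcop
    rw [hM] at this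
    exact (Nat.coprime_add_self_left).mp this
  -- the composite filter
  set D : ℤ → ℝ := conv (upSample M p) (upSample q2 gl) with hD
  set c : ℤ → ℝ := downSample q1 D with hc
  have hupP : (support (upSample M p)).Finite := support_upSample M hM1 p hp
  have hupGl : (support (upSample q2 gl)).Finite := support_upSample q2 h2 gl hgl
  have hDfin : (support D).Finite := support_conv _ _ hupP hupGl
  have hcfin : (support c).Finite := support_downSample q1 h1 D hDfin
  -- frequency identity
  have hfreq : ∀ w : ℂ, w ≠ 0 →
      (1 / (q1:ℂ)) * ∑ k ∈ Finset.range q1,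
        lev gl (w ^ q2 * Complex.exp (-(2 * Real.pi * Complex.I) / q1) ^ (q2 * k)) *
        lev p (w ^ M * Complex.exp (-(2 * Real.pi * Complex.I) / q1) ^ (M * k))
      = lev c (w ^ q1) := by
    intro w hw
    have hω0 : Complex.exp (-(2 * Real.pi * Complex.I) / q1) ≠ 0 := Complex.exp_ne_zero _
    have hterm : ∀ k ∈ Finset.range q1,
        lev gl (w ^ q2 * Complex.exp (-(2 * Real.pi * Complex.I) / q1) ^ (q2 * k)) *
          lev p (w ^ M * Complex.exp (-(2 * Real.pi * Complex.I) / q1) ^ (M * k))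
        = lev D (w * Complex.exp (-(2 * Real.pi * Complex.I) / q1) ^ k) := by
      intro k _
      set ω := Complex.exp (-(2 * Real.pi * Complex.I) / q1) with hω
      have e1 : w ^ q2 * ω ^ (q2 * k) = (w * ω ^ k) ^ q2 := by
        rw [mul_pow, ← pow_mul, mul_comm k q2]
      have e2 : w ^ M * ω ^ (M * k) = (w * ω ^ k) ^ M := by
        rw [mul_pow, ← pow_mul, mul_comm k M]
      have hω0' : ω ≠ 0 := Complex.exp_ne_zero _
      have hv0 : w * ω ^ k ≠ 0 := mul_ne_zero hw (pow_ne_zero _ hω0')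
      rw [e1, e2, mul_comm (lev gl ((w * ω ^ k) ^ q2)) (lev p ((w * ω ^ k) ^ M)),
        ← lev_upSample q2 h2 gl _, ← lev_upSample M hM1 p _,
        ← lev_conv _ _ hupP hupGl _ hv0, hD]
    rw [Finset.sum_congr rfl hterm, lev_avg q1 h1 D hDfin w,
      ← upSample_downSample q1 D, lev_upSample q1 h1 _ w, hc]
  -- coefficient identity
  have hcoeff : ∀ k, ghnew k = gh k - c k := by
    set a : ℤ → ℝ := fun k => ghnew k - (gh k - c k) with ha
    set U : Finset ℤ := hghnew.toFinset ∪ hgh.toFinset ∪ hcfin.toFinset with hU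
    have hsubNew : support ghnew ⊆ ↑U := by
      intro k hk; simp only [hU, Finset.coe_union, Set.mem_union]
      left; left; simpa using hk
    have hsubGh : support gh ⊆ ↑U := by
      intro k hk; simp only [hU, Finset.coe_union, Set.mem_union]
      left; right; simpa using hk
    have hsubC : support c ⊆ ↑U := by
      intro k hk; simp only [hU, Finset.coe_union, Set.mem_union]
      right; simpa using hk
    have hsubA : support a ⊆ ↑U := by
      intro k hk
      rw [mem_support] at hk
      by_contra hx
      have h1' : ghnew k = 0 := by
        by_contra h0; exact hx (hsubNew h0)
      have h2' : gh k = 0 := by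
        by_contra h0; exact hx (hsubGh h0)
      have h3' : c k = 0 := by
        by_contra h0; exact hx (hsubC h0)
      apply hk
      simp [ha, h1', h2', h3']
    have hlev0 : ∀ z : ℂ, z ≠ 0 → ∑ᶠ k : ℤ, ((a k : ℂ)) * z ^ (-k) = 0 := by
      intro z hz
      obtain ⟨w, hwz⟩ := IsAlgClosed.exists_pow_nat_eq z (show 0 < q1 by omega)
      have hw0 : w ≠ 0 := by
        intro h0
        rw [h0, zero_pow (by omega : q1 ≠ 0)] at hwz
        exact hz hwz.symm
      have hlevA : ∑ᶠ k : ℤ, ((a k : ℂ)) * z ^ (-k)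
          = lev ghnew z - (lev gh z - lev c z) := by
        have e0 : ∑ᶠ k : ℤ, ((a k : ℂ)) * z ^ (-k) = lev a z := rfl
        rw [e0, lev_eq_sum a hsubA z, lev_eq_sum ghnew hsubNew z,
          lev_eq_sum gh hsubGh z, lev_eq_sum c hsubC z]
        rw [← Finset.sum_sub_distrib, ← Finset.sum_sub_distrib]
        apply Finset.sum_congr rfl
        intro k _
        simp only [ha]
        push_cast
        ring
      rw [hlevA, ← hwz, hformula w hw0, hfreq w hw0]
      ring
    have hfinA : (support fun k => ((a k : ℂ))).Finite := by
      apply Set.Finite.subset (hghnew.union (hgh.union hcfin))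
      intro k hk
      rw [mem_support] at hk
      by_contra hx
      simp only [Set.mem_union, mem_support, not_or, not_not] at hx
      apply hk
      simp [ha, hx.1, hx.2.1, hx.2.2]
    have hz := lev_coeff_zero _ hfinA hlev0
    intro k
    have : a k = 0 := by exact_mod_cast hz k
    simp only [ha] at this
    linarith
  -- time-domain part
  intro x n
  set Y : ℤ → ℝ := upSample q2 x with hY
  set Z : ℤ → ℝ := downSample M (conv gl (upSample q1 x)) with hZ
  have hmulfin : ∀ (h : ℤ → ℝ), (support h).Finite → ∀ (y : ℤ → ℝ) (m : ℤ),
      (support fun k => h k * y (m - k)).Finite := by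
    intro h hh y m
    apply hh.subset
    intro k hk
    rw [mem_support] at hk ⊢
    intro h0
    simp [h0] at hk
  have hsplit : ∀ m : ℤ, conv ghnew Y m = conv gh Y m - conv c Y m := by
    intro m
    rw [conv, conv, conv, ← finsum_sub_distrib (hmulfin gh hgh Y m) (hmulfin c hcfin Y m)]
    apply finsum_congr
    intro k
    rw [hcoeff k]
    ring
  simp only [downSample]
  rw [hsplit ((M:ℤ) * n)]
  have hmain : conv p (upSample q2 Z) ((q1:ℤ) * n) = conv c Y ((M:ℤ) * n) := by
    set Sgl := hgl.toFinset with hSgl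
    set Sp := hp.toFinset with hSp
    have hpS : support p ⊆ ↑Sp := by intro k hk; simpa [hSp] using hk
    set Kc : Finset ℤ := Finset.image (fun ab : ℤ × ℤ => ((q2:ℤ) * ab.1 + (M:ℤ) * ab.2) / q1)
      (Sgl ×ˢ Sp) with hKc
    have hK : ∀ b k : ℤ, p b ≠ 0 → upSample q2 gl ((q1:ℤ) * k - (M:ℤ) * b) ≠ 0 → k ∈ Kc := by
      intro b k hpb hu
      have hd : (q2:ℤ) ∣ (q1:ℤ) * k - (M:ℤ) * b := by
        by_contra hd
        exact hu (upSample_not_dvd _ _ _ hd)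
      have ha : (q2:ℤ) * (((q1:ℤ) * k - (M:ℤ) * b) / q2) = (q1:ℤ) * k - (M:ℤ) * b :=
        Int.mul_ediv_cancel' hd
      set a := ((q1:ℤ) * k - (M:ℤ) * b) / q2 with haDef
      have hgla : gl a ≠ 0 := by
        intro h0
        apply hu
        rw [upSample, if_pos hd]
        exact h0
      refine Finset.mem_image.mpr ⟨(a, b), Finset.mem_product.mpr
        ⟨by simpa [hSgl] using hgla, by simpa [hSp] using hpb⟩, ?_⟩
      have heq : (q2:ℤ) * a + (M:ℤ) * b = (q1:ℤ) * k := by linarith [ha]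
      simp only
      rw [heq, Int.mul_ediv_cancel_left _ hq1]
    have hc_apply : ∀ k : ℤ, c k = ∑ᶠ b : ℤ, p b * upSample q2 gl ((q1:ℤ) * k - (M:ℤ) * b) := by
      intro k
      rw [hc]
      show D ((q1:ℤ) * k) = _
      rw [hD]
      exact conv_upSample_apply M hM1 p _ ((q1:ℤ) * k)
    have hcK : support c ⊆ ↑Kc := by
      intro k hk
      rw [mem_support, hc_apply k] at hk
      obtain ⟨b, hb⟩ : ∃ b, p b * upSample q2 gl ((q1:ℤ) * k - (M:ℤ) * b) ≠ 0 := by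
        by_contra hcon
        push_neg at hcon
        exact hk (finsum_eq_zero_of_forall_eq_zero hcon)
      have hpb : p b ≠ 0 := fun h0 => hb (by simp [h0])
      have hub : upSample q2 gl ((q1:ℤ) * k - (M:ℤ) * b) ≠ 0 := fun h0 => hb (by simp [h0])
      exact hK b k hpb hub
    have hc_sum : ∀ k : ℤ, c k = ∑ b ∈ Sp, p b * upSample q2 gl ((q1:ℤ) * k - (M:ℤ) * b) := by
      intro k
      rw [hc_apply k]
      apply finsum_eq_finset_sum_of_support_subset
      intro b hb
      rw [mem_support] at hb
      apply hpS
      rw [mem_support]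
      intro h0
      simp [h0] at hb
    rw [conv_eq_sum c Y hcK ((M:ℤ) * n), conv_eq_sum p (upSample q2 Z) hpS ((q1:ℤ) * n)]
    have hexp : ∑ k ∈ Kc, c k * Y ((M:ℤ) * n - k)
        = ∑ b ∈ Sp, ∑ k ∈ Kc,
            p b * (upSample q2 gl ((q1:ℤ) * k - (M:ℤ) * b) * Y ((M:ℤ) * n - k)) := by
      rw [Finset.sum_comm]
      apply Finset.sum_congr rfl
      intro k _
      rw [hc_sum k, Finset.sum_mul]
      apply Finset.sum_congr rfl
      intro b _
      ring
    rw [hexp]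
    apply Finset.sum_congr rfl
    intro b hb
    have hpb : p b ≠ 0 := by simpa [hSp] using hb
    rw [← Finset.mul_sum]
    congr 1
    -- key per-b identity
    have hRfin : ∑ k ∈ Kc, upSample q2 gl ((q1:ℤ) * k - (M:ℤ) * b) * Y ((M:ℤ) * n - k)
        = ∑ᶠ k : ℤ, upSample q2 gl ((q1:ℤ) * k - (M:ℤ) * b) * Y ((M:ℤ) * n - k) := by
      symm
      apply finsum_eq_finset_sum_of_support_subset
      intro k hk
      rw [mem_support] at hk
      have hub : upSample q2 gl ((q1:ℤ) * k - (M:ℤ) * b) ≠ 0 := fun h0 => hk (by simp [h0])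
      exact hK b k hpb hub
    rw [hRfin]
    by_cases hdvd : (q2:ℤ) ∣ (q1:ℤ) * n - b
    · obtain ⟨u, hu⟩ := hdvd
      -- LHS
      have hL : upSample q2 Z ((q1:ℤ) * n - b) = conv gl (upSample q1 x) ((M:ℤ) * u) := by
        rw [hu, upSample_mul q2 hq2, hZ]
        rfl
      rw [hL, conv]
      have hinjL : Function.Injective (fun t : ℤ => (q1:ℤ) * t - b) := by
        intro s t hst
        simp only at hst
        have : (q1:ℤ) * s = (q1:ℤ) * t := by linarith
        exact mul_left_cancel₀ hq1 this
      have hinjR : Function.Injective (fun t : ℤ => b + (q2:ℤ) * t) := by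
        intro s t hst
        simp only at hst
        have : (q2:ℤ) * s = (q2:ℤ) * t := by linarith
        exact mul_left_cancel₀ hq2 this
      have hLre : ∑ᶠ a : ℤ, gl a * upSample q1 x ((M:ℤ) * u - a)
          = ∑ᶠ t : ℤ, gl ((q1:ℤ) * t - b)
              * upSample q1 x ((M:ℤ) * u - ((q1:ℤ) * t - b)) := by
        apply finsum_comp_inj _ (fun t : ℤ => (q1:ℤ) * t - b) hinjL
        intro a hk
        rw [mem_support] at hk
        have hu1 : upSample q1 x ((M:ℤ) * u - a) ≠ 0 := fun h0 => hk (by simp [h0])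
        have hd1 : (q1:ℤ) ∣ (M:ℤ) * u - a := by
          by_contra hd
          exact hu1 (upSample_not_dvd _ _ _ hd)
        obtain ⟨s, hs⟩ := hd1
        exact ⟨u + n - s, by
          show (q1:ℤ) * (u + n - s) - b = a
          linear_combination (-u) * hMc + hu + hs⟩
      have hRre : ∑ᶠ k : ℤ, upSample q2 gl ((q1:ℤ) * k - (M:ℤ) * b) * Y ((M:ℤ) * n - k)
          = ∑ᶠ t : ℤ, upSample q2 gl ((q1:ℤ) * (b + (q2:ℤ) * t) - (M:ℤ) * b)
              * Y ((M:ℤ) * n - (b + (q2:ℤ) * t)) := by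
        apply finsum_comp_inj _ (fun t : ℤ => b + (q2:ℤ) * t) hinjR
        intro k hk
        rw [mem_support] at hk
        have hu1 : upSample q2 gl ((q1:ℤ) * k - (M:ℤ) * b) ≠ 0 :=
          fun h0 => hk (by simp [h0])
        have hd1 : (q2:ℤ) ∣ (q1:ℤ) * k - (M:ℤ) * b := by
          by_contra hd
          exact hu1 (upSample_not_dvd _ _ _ hd)
        obtain ⟨s, hs2⟩ := hd1
        have hq1kb : (q1:ℤ) * (k - b) = (q2:ℤ) * (s + b) := by
          linear_combination hs2 + b * hMc
        have hdkb : (q2:ℤ) ∣ (k - b) := by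
          refine hcopq1.dvd_of_dvd_mul_left ⟨s + b, ?_⟩
          linarith [hq1kb]
        obtain ⟨t, ht⟩ := hdkb
        exact ⟨t, by show b + (q2:ℤ) * t = k; linarith [ht]⟩
      rw [hLre, hRre]
      apply finsum_congr
      intro t
      have eL : (M:ℤ) * u - ((q1:ℤ) * t - b) = (q1:ℤ) * (u + n - t) := by
        linear_combination u * hMc - hu
      have eR1 : (q1:ℤ) * (b + (q2:ℤ) * t) - (M:ℤ) * b = (q2:ℤ) * ((q1:ℤ) * t - b) := by
        linear_combination (-b) * hMc
      have eR2 : (M:ℤ) * n - (b + (q2:ℤ) * t) = (q2:ℤ) * (u + n - t) := by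
        linear_combination n * hMc + hu
      rw [eL, eR1, eR2, upSample_mul q1 hq1, hY, upSample_mul q2 hq2,
        upSample_mul q2 hq2]
    · -- non-divisible case: both sides vanish
      rw [upSample_not_dvd q2 Z _ hdvd]
      symm
      apply finsum_eq_zero_of_forall_eq_zero
      intro k
      by_cases d1 : (q2:ℤ) ∣ (q1:ℤ) * k - (M:ℤ) * b
      · by_cases d2 : (q2:ℤ) ∣ (M:ℤ) * n - k
        · exfalso
          apply hdvd
          have hdd : (q2:ℤ) ∣ (M:ℤ) * ((q1:ℤ) * n - b) := by
            have : (M:ℤ) * ((q1:ℤ) * n - b)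
                = (q1:ℤ) * ((M:ℤ) * n - k) + ((q1:ℤ) * k - (M:ℤ) * b) := by ring
            rw [this]
            exact dvd_add (Dvd.dvd.mul_left d2 _) d1
          exact hcopMZ.dvd_of_dvd_mul_left hdd
        · rw [hY, upSample_not_dvd q2 x _ d2, mul_zero]
      · rw [upSample_not_dvd q2 gl _ d1, zero_mul]
  rw [hmain]
end

section
/- Two downsamplers commute with upsamplers when coprime: for sequences x : ℤ → ℝ and positive integers p, q with gcd(p,q) = 1, applying a q-fold upsampler followed by a p-fold downsampler yields the same result as applying the p-fold downsampler followed by the q-fold upsampler: (↓p ∘ ↑q)(x) = (↑q ∘ ↓p)(x). -/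
/-- Coprime sampler swap: for `gcd(p, q) = 1`, a `q`-fold upsampler followed by
a `p`-fold downsampler yields the same result as the `p`-fold downsampler
followed by the `q`-fold upsampler: `(↓p ∘ ↑q)(x) = (↑q ∘ ↓p)(x)`. -/
theorem downsample_upsample_swap (p q : ℕ) (hp : 1 ≤ p) (hq : 1 ≤ q)
    (hcop : Nat.gcd p q = 1) (x : ℤ → ℝ) :
    downSample p (upSample q x) = upSample q (downSample p x) := by
  funext n
  have hcop' : IsCoprime (q : ℤ) (p : ℤ) := by
    rw [Int.isCoprime_iff_gcd_eq_one, Int.gcd_natCast_natCast, Nat.gcd_comm]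
    exact hcop
  simp only [downSample, upSample]
  have hdiv : (q : ℤ) ∣ (p : ℤ) * n ↔ (q : ℤ) ∣ n :=
    ⟨fun h => hcop'.dvd_of_dvd_mul_left h, fun h => h.mul_left _⟩
  by_cases h : (q : ℤ) ∣ n
  · rw [if_pos (hdiv.mpr h), if_pos h]
    obtain ⟨k, rfl⟩ := h
    have hq0 : (q : ℤ) ≠ 0 := by positivity
    rw [Int.mul_ediv_cancel_left _ hq0, mul_left_comm, Int.mul_ediv_cancel_left _ hq0]
  · rw [if_neg (fun hh => h (hdiv.mp hh)), if_neg h]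
end
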